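/- arXiv:1003.4491 — 2 statements merged into one kernel-verified Lean document; each statement's English description precedes it below -/
import Mathlib

section
/- For |p|<1, x ∈ ℂ*, q ∈ ℂ* and positive integer k: θ_p(x;pq)_k = (-x)^{-k(k-1)/2} q^{-k(k-1)(2k-1)/6} p^{-k(k-1)(k-2)/6} θ_p(x;q)_k. -/
open scoped BigOperators

/-- The infinite q-Pochhammer symbol `(x;q)_∞ = ∏_{j≥0} (1 - x q^j)`. -/
noncomputable def pochInf (x q : ℂ) : ℂ := ∏' j : ℕ, (1 - x * q ^ j)

/-- The theta function `θ_p(x) = (x;p)_∞ (p/x;p)_∞`. -/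
noncomputable def theta (p x : ℂ) : ℂ := pochInf x p * pochInf (p / x) p

lemma multipliable_poch (p x : ℂ) (hp : ‖p‖ < 1) :
    Multipliable (fun j : ℕ => 1 - x * p ^ j) := by
  by_cases hz : ∃ N, 1 - x * p ^ N = 0
  · obtain ⟨N, hN⟩ := hz
    refine ⟨0, ?_⟩
    have hev : ∀ᶠ s : Finset ℕ in Filter.atTop,
        (0 : ℂ) = ∏ i ∈ s, (1 - x * p ^ i) := by
      filter_upwards [Filter.eventually_ge_atTop ({N} : Finset ℕ)] with s hs
      exact (Finset.prod_eq_zero (i := N) (by simpa using hs) hN).symm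
    exact Filter.Tendsto.congr' hev tendsto_const_nhds
  · push_neg at hz
    have hsum : Summable fun n : ℕ => Complex.log (1 - x * p ^ n) := by
      have hgeo : Summable fun n : ℕ =>
          3 / 2 * (‖x‖ * ‖p‖ ^ n) :=
        ((summable_geometric_of_lt_one (norm_nonneg p) hp).mul_left
          ‖x‖).mul_left (3 / 2)
      apply Summable.of_norm_bounded_eventually_nat hgeo
      have htend : Filter.Tendsto (fun n : ℕ => ‖x‖ * ‖p‖ ^ n)
          Filter.atTop (nhds 0) := by
        simpa using (tendsto_pow_atTop_nhds_zero_of_lt_one (norm_nonneg p)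
          hp).const_mul ‖x‖
      have hsmall : ∀ᶠ n : ℕ in Filter.atTop,
          ‖x‖ * ‖p‖ ^ n ≤ 1 / 2 := by
        have := htend.eventually (eventually_le_nhds (by norm_num : (0:ℝ) < 1/2))
        filter_upwards [this] with n hn using hn
      filter_upwards [hsmall] with n hn
      have hnorm : ‖(-(x * p ^ n) : ℂ)‖ = ‖x‖ * ‖p‖ ^ n := by
        simp
      have h1 : ‖(-(x * p ^ n) : ℂ)‖ ≤ 1 / 2 := by rw [hnorm]; exact hn
      have hlog := Complex.norm_log_one_add_half_le_self h1
      have heq : (1 : ℂ) + -(x * p ^ n) = 1 - x * p ^ n := by ring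
      rw [heq, hnorm] at hlog
      exact hlog
    exact Complex.multipliable_of_summable_log hsum

lemma pochInf_rec (p x : ℂ) (hp : ‖p‖ < 1) :
    pochInf x p = (1 - x) * pochInf (x * p) p := by
  have hm : Multipliable (fun n : ℕ => 1 - x * p ^ (n + 1)) :=
    (multipliable_poch p (x * p) hp).congr fun n => by ring
  have h := tprod_eq_zero_mul' (f := fun j : ℕ => 1 - x * p ^ j) hm
  simp only [pow_zero, mul_one] at h
  rw [pochInf, h, pochInf]
  congr 1
  exact tprod_congr fun n => by ring

lemma theta_shift (p x : ℂ) (hp : ‖p‖ < 1) (hp0 : p ≠ 0) (hx : x ≠ 0) :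
    theta p x = (-x) * theta p (p * x) := by
  have hpx : p / (p * x) = x⁻¹ := by field_simp
  have h1 : pochInf x p = (1 - x) * pochInf (x * p) p := pochInf_rec p x hp
  have h2 : pochInf x⁻¹ p = (1 - x⁻¹) * pochInf (x⁻¹ * p) p := pochInf_rec p x⁻¹ hp
  have hd : p / x = x⁻¹ * p := by field_simp
  have he : p * x = x * p := mul_comm _ _
  rw [theta, theta, hpx, he, h1, h2, hd]
  have hkey : (-x) * (1 - x⁻¹) = 1 - x := by field_simp; ring
  linear_combination (-(pochInf (x * p) p * pochInf (x⁻¹ * p) p)) * hkey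

lemma theta_pow (p x : ℂ) (hp : ‖p‖ < 1) (hp0 : p ≠ 0) (hx : x ≠ 0) (n : ℕ) :
    theta p x = (∏ j ∈ Finset.range n, (-(x * p ^ j))) * theta p (p ^ n * x) := by
  induction n with
  | zero => simp
  | succ n ih =>
    rw [ih, Finset.prod_range_succ,
      theta_shift p (p ^ n * x) hp hp0 (mul_ne_zero (pow_ne_zero _ hp0) hx),
      show p * (p ^ n * x) = p ^ (n + 1) * x by ring]
    ring

lemma sum_id_int (k : ℕ) : 2 * (∑ j ∈ Finset.range k, (j : ℤ)) = k * (k - 1) := by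
  induction k with
  | zero => simp
  | succ k ih =>
    rw [Finset.sum_range_succ]
    push_cast
    push_cast at ih
    linear_combination ih

lemma sum_sq_int (k : ℕ) :
    6 * (∑ j ∈ Finset.range k, (j : ℤ) * j) = k * (k - 1) * (2 * k - 1) := by
  induction k with
  | zero => simp
  | succ k ih =>
    rw [Finset.sum_range_succ]
    push_cast
    push_cast at ih
    linear_combination ih

lemma sum_tri_int (k : ℕ) :
    6 * (∑ j ∈ Finset.range k, ∑ i ∈ Finset.range j, (i : ℤ)) = k * (k - 1) * (k - 2) := by
  induction k with
  | zero => simp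
  | succ k ih =>
    rw [Finset.sum_range_succ]
    have h := sum_id_int k
    push_cast
    push_cast at ih h
    linear_combination ih + 3 * h

theorem thetaPoch_base_pq (p q x : ℂ) (hp : ‖p‖ < 1) (hp0 : p ≠ 0)
    (hq0 : q ≠ 0) (hx : x ≠ 0) (k : ℕ) (hk : 0 < k) :
    (∏ j ∈ Finset.range k, theta p (x * (p * q) ^ j))
      = (-x) ^ (-((k : ℤ) * (k - 1) / 2))
          * q ^ (-((k : ℤ) * (k - 1) * (2 * k - 1) / 6))
          * p ^ (-((k : ℤ) * (k - 1) * (k - 2) / 6))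
          * ∏ j ∈ Finset.range k, theta p (x * q ^ j) := by
  set N1 : ℕ := ∑ j ∈ Finset.range k, j with hN1
  set N2 : ℕ := ∑ j ∈ Finset.range k, j * j with hN2
  set N3 : ℕ := ∑ j ∈ Finset.range k, ∑ i ∈ Finset.range j, i with hN3
  -- the key factorization
  have key : (∏ j ∈ Finset.range k, theta p (x * q ^ j))
      = (-x) ^ N1 * q ^ N2 * p ^ N3
        * ∏ j ∈ Finset.range k, theta p (x * (p * q) ^ j) := by
    have step : ∀ j : ℕ, theta p (x * q ^ j)
        = ((-x) ^ j * q ^ (j * j) * p ^ (∑ i ∈ Finset.range j, i))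
          * theta p (x * (p * q) ^ j) := by
      intro j
      have hxq : x * q ^ j ≠ 0 := mul_ne_zero hx (pow_ne_zero _ hq0)
      have h := theta_pow p (x * q ^ j) hp hp0 hxq j
      have hc : (∏ i ∈ Finset.range j, (-(x * q ^ j * p ^ i)))
          = (-x) ^ j * q ^ (j * j) * p ^ (∑ i ∈ Finset.range j, i) := by
        have hterm : ∀ i : ℕ, -(x * q ^ j * p ^ i) = (-x * q ^ j) * p ^ i :=
          fun i => by ring
        rw [Finset.prod_congr rfl (fun i _ => hterm i), Finset.prod_mul_distrib,
          Finset.prod_const, Finset.prod_pow_eq_pow_sum, Finset.card_range,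
          mul_pow, ← pow_mul]
      have harg : p ^ j * (x * q ^ j) = x * (p * q) ^ j := by
        rw [mul_pow]; ring
      rw [h, hc, harg]
    calc (∏ j ∈ Finset.range k, theta p (x * q ^ j))
        = ∏ j ∈ Finset.range k,
            (((-x) ^ j * q ^ (j * j) * p ^ (∑ i ∈ Finset.range j, i))
              * theta p (x * (p * q) ^ j)) := Finset.prod_congr rfl fun j _ => step j
      _ = (-x) ^ N1 * q ^ N2 * p ^ N3
            * ∏ j ∈ Finset.range k, theta p (x * (p * q) ^ j) := by
          rw [Finset.prod_mul_distrib, Finset.prod_mul_distrib, Finset.prod_mul_distrib,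
            Finset.prod_pow_eq_pow_sum, Finset.prod_pow_eq_pow_sum,
            Finset.prod_pow_eq_pow_sum]
  have hxne : (-x : ℂ) ≠ 0 := neg_ne_zero.mpr hx
  -- exponent identities
  have e1 : (N1 : ℤ) = (k : ℤ) * (k - 1) / 2 := by
    have h : 2 * (N1 : ℤ) = (k : ℤ) * (k - 1) := by
      rw [hN1]; push_cast; exact sum_id_int k
    omega
  have e2 : (N2 : ℤ) = (k : ℤ) * (k - 1) * (2 * k - 1) / 6 := by
    have h : 6 * (N2 : ℤ) = (k : ℤ) * (k - 1) * (2 * k - 1) := by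
      rw [hN2]; push_cast; exact sum_sq_int k
    omega
  have e3 : (N3 : ℤ) = (k : ℤ) * (k - 1) * (k - 2) / 6 := by
    have h : 6 * (N3 : ℤ) = (k : ℤ) * (k - 1) * (k - 2) := by
      rw [hN3]; push_cast; exact sum_tri_int k
    omega
  rw [key, ← e1, ← e2, ← e3, zpow_neg, zpow_neg, zpow_neg,
    zpow_natCast, zpow_natCast, zpow_natCast]
  have hne1 : ((-x) ^ N1 : ℂ) ≠ 0 := pow_ne_zero _ hxne
  have hne2 : (q ^ N2 : ℂ) ≠ 0 := pow_ne_zero _ hq0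
  have hne3 : (p ^ N3 : ℂ) ≠ 0 := pow_ne_zero _ hp0
  field_simp
end

section
/- Under the same hypotheses (Diophantine conditions ∑_a ε(m^{(a)}) m_i^{(a)} m_j^{(a)} m_k^{(a)} = 0, ∑_a ε(m^{(a)}) m_i^{(a)} m_j^{(a)} = 0, ∑_a ε(m^{(a)}) m_i^{(a)} = 0), the certificate h_i(x;q;p) = ∏_{a=1}^K θ_p(x^{m^{(a)}}; q)_{m_i^{(a)}}^{ε(m^{(a)})} is p-elliptic in q: h_i(x; pq; p) = h_i(x; q; p). -/
open scoped BigOperators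

/-- The elliptic shifted factorial `θ_p(x;q)_n` for `n ∈ ℤ`. -/
noncomputable def thetaPoch (p q x : ℂ) : ℤ → ℂ
  | Int.ofNat n => ∏ j ∈ Finset.range n, theta p (x * q ^ j)
  | Int.negSucc n => (∏ j ∈ Finset.range (n + 1), theta p (x * q ^ (-(j + 1 : ℤ))))⁻¹

set_option maxHeartbeats 1000000 in
open Filter in
lemma poch_mult {p : ℂ} (hp : ‖p‖ < 1) (x : ℂ) :
    Multipliable fun j : ℕ => 1 - x * p ^ j := by
  have h0 : (0:ℝ) ≤ ‖p‖ := norm_nonneg _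
  have htt : Tendsto (fun N : ℕ => ‖x‖ * ‖p‖ ^ N) atTop (nhds 0) := by
    simpa using (tendsto_pow_atTop_nhds_zero_of_lt_one h0 hp).const_mul (‖x‖)
  obtain ⟨N, hN⟩ := (htt.eventually_lt_const (by norm_num : (0:ℝ) < 1/2)).exists
  -- bound the tail terms
  have hb : ∀ j : ℕ, ‖x * p ^ (j + N)‖ ≤ ‖x‖ * ‖p‖ ^ N := by
    intro j
    rw [norm_mul, norm_pow]
    have : ‖p‖ ^ (j + N) ≤ ‖p‖ ^ N :=
      pow_le_pow_of_le_one h0 hp.le (by omega)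
    exact mul_le_mul_of_nonneg_left this (norm_nonneg _)
  have hsmall : ∀ j : ℕ, ‖x * p ^ (j + N)‖ < 1/2 :=
    fun j => lt_of_le_of_lt (hb j) hN
  have hne : ∀ j : ℕ, (1 : ℂ) - x * p ^ (j + N) ≠ 0 := by
    intro j h
    have h2 : x * p ^ (j+N) = 1 := by linear_combination -h
    have := hsmall j
    rw [h2] at this
    norm_num at this
  have htail : Multipliable fun j : ℕ => 1 - x * p ^ (j + N) := by
    refine Complex.multipliable_of_summable_log ?_
    apply Summable.of_norm_bounded (g := fun j => (3/2) * (‖x‖ * ‖p‖ ^ N) * ‖p‖ ^ j)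
    · exact (summable_geometric_of_lt_one h0 hp).mul_left _
    intro j
    have h1 : ‖(-(x * p ^ (j+N)) : ℂ)‖ ≤ 1/2 := by
      rw [norm_neg]; exact (hsmall j).le
    have h2 := Complex.norm_log_one_add_half_le_self h1
    have h3 : (1 : ℂ) + -(x * p ^ (j+N)) = 1 - x * p ^ (j+N) := by ring
    rw [h3] at h2
    refine h2.trans ?_
    rw [norm_neg, norm_mul, norm_pow, pow_add]
    ring_nf
    nlinarith [norm_nonneg x, pow_nonneg h0 j, pow_nonneg h0 N,
      norm_nonneg p]
  exact Multipliable.comp_nat_add (k := N) htail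

lemma pochInf_split {p : ℂ} (hp : ‖p‖ < 1) (x : ℂ) :
    pochInf x p = (1 - x) * pochInf (x * p) p := by
  have hm : Multipliable fun n : ℕ => 1 - x * p ^ (n + 1) := by
    have := poch_mult hp (x * p)
    refine this.congr fun n => ?_
    ring_nf
  have := tprod_eq_zero_mul' (f := fun n : ℕ => 1 - x * p ^ n) hm
  rw [pochInf, this]
  simp only [pow_zero, mul_one]
  congr 1
  rw [pochInf]
  exact tprod_congr fun n => by ring_nf

lemma theta_pmul {p x : ℂ} (hp : ‖p‖ < 1) (hp0 : p ≠ 0) (hx : x ≠ 0) :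
    theta p (p * x) = -x⁻¹ * theta p x := by
  have e1 : p / (p * x) = x⁻¹ := by field_simp
  have e2 : x⁻¹ * p = p / x := by field_simp
  rw [theta, theta, e1, pochInf_split hp x⁻¹, pochInf_split hp x, e2]
  have e3 : (1 - x⁻¹) = -x⁻¹ * (1 - x) := by field_simp; ring
  rw [e3, mul_comm p x]
  ring

lemma theta_pdiv {p y : ℂ} (hp : ‖p‖ < 1) (hp0 : p ≠ 0) (hy : y ≠ 0) :
    theta p y = -y * theta p (p * y) := by
  rw [theta_pmul hp hp0 hy, ← mul_assoc, neg_mul_neg, mul_inv_cancel₀ hy, one_mul]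

lemma two_dvd_A (k : ℤ) : 2 ∣ k * (k - 1) := by
  have : ((k * (k - 1) : ℤ) : ZMod 2) = 0 := by
    push_cast; generalize (k : ZMod 2) = a; revert a; decide
  exact (ZMod.intCast_zmod_eq_zero_iff_dvd _ 2).mp this

lemma six_dvd_B (k : ℤ) : 6 ∣ k * (k - 1) * (2 * k - 1) := by
  have : ((k * (k - 1) * (2 * k - 1) : ℤ) : ZMod 6) = 0 := by
    push_cast; generalize (k : ZMod 6) = a; revert a; decide
  exact (ZMod.intCast_zmod_eq_zero_iff_dvd _ 6).mp this

lemma six_dvd_C (k : ℤ) : 6 ∣ k * (k - 1) * (k - 2) := by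
  have : ((k * (k - 1) * (k - 2) : ℤ) : ZMod 6) = 0 := by
    push_cast; generalize (k : ZMod 6) = a; revert a; decide
  exact (ZMod.intCast_zmod_eq_zero_iff_dvd _ 6).mp this

lemma mulA (k : ℤ) : 2 * (k * (k - 1) / 2) = k * (k - 1) := Int.mul_ediv_cancel' (two_dvd_A k)
lemma mulB (k : ℤ) : 6 * (k * (k - 1) * (2 * k - 1) / 6) = k * (k - 1) * (2 * k - 1) :=
  Int.mul_ediv_cancel' (six_dvd_B k)
lemma mulC (k : ℤ) : 6 * (k * (k - 1) * (k - 2) / 6) = k * (k - 1) * (k - 2) :=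
  Int.mul_ediv_cancel' (six_dvd_C k)

lemma A_succ (k : ℤ) : (k + 1) * (k + 1 - 1) / 2 = k * (k - 1) / 2 + k := by
  have h1 := mulA (k + 1); have h2 := mulA k
  have h3 : (k + 1) * (k + 1 - 1) = k * (k - 1) + 2 * k := by ring
  linarith

lemma B_succ (k : ℤ) :
    (k + 1) * (k + 1 - 1) * (2 * (k + 1) - 1) / 6 = k * (k - 1) * (2 * k - 1) / 6 + k * k := by
  have h1 := mulB (k + 1); have h2 := mulB k
  have h3 : (k + 1) * (k + 1 - 1) * (2 * (k + 1) - 1)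
      = k * (k - 1) * (2 * k - 1) + 6 * (k * k) := by ring
  linarith

lemma C_succ (k : ℤ) :
    (k + 1) * (k + 1 - 1) * (k + 1 - 2) / 6 = k * (k - 1) * (k - 2) / 6 + k * (k - 1) / 2 := by
  have h1 := mulC (k + 1); have h2 := mulC k; have h4 := mulA k
  have h3 : (k + 1) * (k + 1 - 1) * (k + 1 - 2)
      = k * (k - 1) * (k - 2) + 3 * (k * (k - 1)) := by ring
  linarith

lemma theta_pzpow {p x : ℂ} (hp : ‖p‖ < 1) (hp0 : p ≠ 0) (hx : x ≠ 0) (s : ℤ) :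
    theta p (p ^ s * x) = (-x) ^ (-s) * p ^ (-(s * (s - 1) / 2)) * theta p x := by
  have hnx : (-x : ℂ) ≠ 0 := neg_ne_zero.mpr hx
  induction s using Int.induction_on with
  | zero => simp
  | succ s ih =>
    have e : p ^ ((s : ℤ) + 1) * x = p * (p ^ (s : ℤ) * x) := by
      rw [zpow_add_one₀ hp0]; ring
    have hy : p ^ (s : ℤ) * x ≠ 0 := mul_ne_zero (zpow_ne_zero _ hp0) hx
    rw [e, theta_pmul hp hp0 hy, ih]
    have eA : -(((s:ℤ) + 1) * ((s:ℤ) + 1 - 1) / 2) = -((s:ℤ) * ((s:ℤ) - 1) / 2) + -(s:ℤ) := by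
      have := A_succ (s : ℤ); omega
    rw [show (-((s:ℤ)+1)) = -(s:ℤ) + (-1:ℤ) by ring, eA, zpow_add₀ hnx, zpow_add₀ hp0,
      mul_inv, ← zpow_neg, zpow_neg_one, inv_neg]
    ring
  | pred s ih =>
    have hy : p ^ (-(s:ℤ) - 1) * x ≠ 0 := mul_ne_zero (zpow_ne_zero _ hp0) hx
    have e : p * (p ^ (-(s:ℤ) - 1) * x) = p ^ (-(s:ℤ)) * x := by
      rw [show (-(s:ℤ)) = (-(s:ℤ) - 1) + 1 by ring, zpow_add_one₀ hp0]; ring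
    rw [theta_pdiv hp hp0 hy, e, ih]
    have eA : -((-(s:ℤ) - 1) * (-(s:ℤ) - 1 - 1) / 2)
        = -((-(s:ℤ)) * (-(s:ℤ) - 1) / 2) + (-(s:ℤ) - 1) := by
      have := A_succ (-(s:ℤ) - 1)
      have h3 : (-(s:ℤ) - 1 + 1) * (-(s:ℤ) - 1 + 1 - 1) = (-(s:ℤ)) * (-(s:ℤ) - 1) := by ring
      omega
    rw [show (-(-(s:ℤ) - 1)) = -(-(s:ℤ)) + (1:ℤ) by ring, eA, zpow_add₀ hnx, zpow_add₀ hp0,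
      zpow_one]
    ring

lemma thetaPoch_ofNat (p q x : ℂ) (n : ℕ) :
    thetaPoch p q x (n : ℤ) = ∏ j ∈ Finset.range n, theta p (x * q ^ j) := rfl

lemma thetaPoch_negSucc (p q x : ℂ) (n : ℕ) :
    thetaPoch p q x (Int.negSucc n)
      = (∏ j ∈ Finset.range (n + 1), theta p (x * q ^ (-(j + 1 : ℤ))))⁻¹ := rfl

lemma thetaPoch_zero (p q x : ℂ) : thetaPoch p q x 0 = 1 := by
  have := thetaPoch_ofNat p q x 0
  simpa using this

lemma thetaPoch_succ {p q x : ℂ}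
    (hθ : ∀ k : ℤ, theta p (x * q ^ k) ≠ 0) (k : ℤ) :
    thetaPoch p q x (k + 1) = thetaPoch p q x k * theta p (x * q ^ k) := by
  rcases k with n | n
  · rw [show (Int.ofNat n : ℤ) = ((n : ℕ) : ℤ) from rfl]
    rw [show ((n : ℕ) : ℤ) + 1 = ((n + 1 : ℕ) : ℤ) by omega]
    rw [thetaPoch_ofNat, thetaPoch_ofNat, Finset.prod_range_succ, zpow_natCast]
  · rcases n with _ | n
    · rw [show (Int.negSucc 0 : ℤ) + 1 = ((0 : ℕ) : ℤ) by rw [Int.negSucc_eq]; omega]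
      rw [thetaPoch_ofNat, thetaPoch_negSucc]
      simp only [Finset.range_zero, Finset.prod_empty, zero_add, Finset.prod_range_one]
      rw [show (Int.negSucc 0 : ℤ) = -((↑(0:ℕ) : ℤ) + 1) by simp [Int.negSucc_eq]]
      exact (inv_mul_cancel₀ (hθ (-((↑(0:ℕ) : ℤ) + 1)))).symm
    · rw [show (Int.negSucc (n + 1) : ℤ) + 1 = Int.negSucc n by rw [Int.negSucc_eq, Int.negSucc_eq]; omega]
      rw [thetaPoch_negSucc, thetaPoch_negSucc]
      rw [show (Int.negSucc (n + 1) : ℤ) = -((↑(n + 1) : ℤ) + 1) by simp [Int.negSucc_eq]]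
      conv_rhs => rw [Finset.prod_range_succ, mul_inv]
      rw [mul_assoc, inv_mul_cancel₀ (hθ (-((↑(n + 1) : ℤ) + 1))), mul_one]

lemma thetaPoch_ne_zero {p q x : ℂ}
    (hθ : ∀ k : ℤ, theta p (x * q ^ k) ≠ 0) (k : ℤ) :
    thetaPoch p q x k ≠ 0 := by
  rcases k with n | n
  · rw [show (Int.ofNat n : ℤ) = ((n : ℕ) : ℤ) from rfl, thetaPoch_ofNat]
    refine Finset.prod_ne_zero_iff.mpr fun j _ => ?_
    have := hθ (j : ℤ)
    rwa [zpow_natCast] at this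
  · rw [thetaPoch_negSucc]
    exact inv_ne_zero (Finset.prod_ne_zero_iff.mpr fun j _ => hθ _)

lemma zpow_sum₀ {ι : Type*} {a : ℂ} (ha : a ≠ 0) (s : Finset ι) (f : ι → ℤ) :
    ∏ i ∈ s, a ^ f i = a ^ (∑ i ∈ s, f i) := by
  induction s using Finset.cons_induction with
  | empty => simp
  | cons i s hi ih => rw [Finset.prod_cons, Finset.sum_cons, ih, ← zpow_add₀ ha]


lemma main_L {p q x : ℂ} (hp : ‖p‖ < 1) (hp0 : p ≠ 0) (hq0 : q ≠ 0) (hx : x ≠ 0)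
    (hθ : ∀ k s : ℤ, theta p (x * q ^ k * p ^ s) ≠ 0) (k : ℤ) :
    thetaPoch p (p * q) x k
      = (-x) ^ (-(k * (k - 1) / 2)) * q ^ (-(k * (k - 1) * (2 * k - 1) / 6))
        * p ^ (-(k * (k - 1) * (k - 2) / 6)) * thetaPoch p q x k := by
  have hnx : (-x : ℂ) ≠ 0 := neg_ne_zero.mpr hx
  have hθq : ∀ k : ℤ, theta p (x * q ^ k) ≠ 0 := by
    intro k; have := hθ k 0; simpa using this
  have hθpq : ∀ k : ℤ, theta p (x * (p * q) ^ k) ≠ 0 := by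
    intro k
    have := hθ k k
    rw [mul_zpow, show x * (p ^ k * q ^ k) = x * q ^ k * p ^ k by ring]
    exact this
  have h3 : ∀ k : ℤ, theta p (x * (p * q) ^ k)
      = (-(x * q ^ k)) ^ (-k) * p ^ (-(k * (k - 1) / 2)) * theta p (x * q ^ k) := by
    intro k
    rw [show x * (p * q) ^ k = p ^ k * (x * q ^ k) by rw [mul_zpow]; ring]
    exact theta_pzpow hp hp0 (mul_ne_zero hx (zpow_ne_zero _ hq0)) k
  have h4 : ∀ k : ℤ, (-(x * q ^ k)) ^ (-k) = (-x) ^ (-k) * q ^ (-(k * k)) := by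
    intro k
    rw [show -(x * q ^ k) = (-x) * q ^ k by ring, mul_zpow, ← zpow_mul,
      show k * -k = -(k * k) by ring]
  have Esplit : ∀ k : ℤ,
      (-x) ^ (-((k+1) * (k+1-1) / 2)) * q ^ (-((k+1) * (k+1-1) * (2*(k+1)-1) / 6))
        * p ^ (-((k+1) * (k+1-1) * (k+1-2) / 6))
      = ((-x) ^ (-(k * (k-1) / 2)) * q ^ (-(k * (k-1) * (2*k-1) / 6))
          * p ^ (-(k * (k-1) * (k-2) / 6)))
        * ((-x) ^ (-k) * q ^ (-(k * k)) * p ^ (-(k * (k-1) / 2))) := by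
    intro k
    have eA : -((k+1) * (k+1-1) / 2) = -(k * (k-1) / 2) + -k := by
      have := A_succ k; linarith
    have eB : -((k+1) * (k+1-1) * (2*(k+1)-1) / 6) = -(k * (k-1) * (2*k-1) / 6) + -(k*k) := by
      have := B_succ k; linarith
    have eC : -((k+1) * (k+1-1) * (k+1-2) / 6) = -(k * (k-1) * (k-2) / 6) + -(k * (k-1) / 2) := by
      have := C_succ k; linarith
    rw [eA, eB, eC, zpow_add₀ hnx, zpow_add₀ hq0, zpow_add₀ hp0]
    ring
  have step_down : ∀ k : ℤ,
      (thetaPoch p (p * q) x (k+1)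
        = (-x) ^ (-((k+1) * (k+1-1) / 2)) * q ^ (-((k+1) * (k+1-1) * (2*(k+1)-1) / 6))
          * p ^ (-((k+1) * (k+1-1) * (k+1-2) / 6)) * thetaPoch p q x (k+1)) →
      thetaPoch p (p * q) x k
        = (-x) ^ (-(k * (k - 1) / 2)) * q ^ (-(k * (k - 1) * (2 * k - 1) / 6))
          * p ^ (-(k * (k - 1) * (k - 2) / 6)) * thetaPoch p q x k := by
    intro k ih
    have h1 := thetaPoch_succ hθpq k
    have h2 := thetaPoch_succ hθq k
    rw [ih, h2, h3 k, h4 k, Esplit k] at h1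
    refine mul_right_cancel₀ (b := (-x) ^ (-k) * q ^ (-(k * k)) * p ^ (-(k * (k-1) / 2))
      * theta p (x * q ^ k)) ?_ ?_
    · exact mul_ne_zero (mul_ne_zero (mul_ne_zero (zpow_ne_zero _ hnx) (zpow_ne_zero _ hq0))
        (zpow_ne_zero _ hp0)) (hθq k)
    · linear_combination -h1
  induction k using Int.induction_on with
  | zero =>
    rw [thetaPoch_zero, thetaPoch_zero]
    norm_num
  | succ i ih =>
    rw [thetaPoch_succ hθpq, ih, thetaPoch_succ hθq, h3, h4, Esplit]
    ring
  | pred i ih =>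
    refine step_down _ ?_
    rw [show (-(i:ℤ) - 1) + 1 = -(i:ℤ) by ring]
    exact ih

lemma prod_zpow' {ι : Type*} (s : Finset ι) (f : ι → ℂ) (n : ℤ) :
    (∏ i ∈ s, f i) ^ n = ∏ i ∈ s, (f i) ^ n := by
  induction s using Finset.cons_induction with
  | empty => simp
  | cons i s hi ih => rw [Finset.prod_cons, Finset.prod_cons, mul_zpow, ih]

theorem certificate_elliptic_in_q (K n : ℕ) (hK : 0 < K) (hn : 0 < n)
    (m : Fin K → Fin n → ℤ) (ε : Fin K → ℤ)
    (p q : ℂ) (hp : ‖p‖ < 1) (hp0 : p ≠ 0) (hq0 : q ≠ 0)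
    (x : Fin n → ℂ) (hx : ∀ l, x l ≠ 0)
    (hreg : ∀ (a : Fin K) (k s : ℤ),
      theta p ((∏ l, x l ^ m a l) * q ^ k * p ^ s) ≠ 0)
    (h3 : ∀ i j k : Fin n, ∑ a, ε a * m a i * m a j * m a k = 0)
    (h2 : ∀ i j : Fin n, ∑ a, ε a * m a i * m a j = 0)
    (h1 : ∀ i : Fin n, ∑ a, ε a * m a i = 0) :
    ∀ i : Fin n,
      (∏ a, thetaPoch p (p * q) (∏ l, x l ^ m a l) (m a i) ^ ε a)
        = ∏ a, thetaPoch p q (∏ l, x l ^ m a l) (m a i) ^ ε a := by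
  intro i
  have hxa : ∀ a : Fin K, (∏ l, x l ^ m a l : ℂ) ≠ 0 := fun a =>
    Finset.prod_ne_zero_iff.mpr fun l _ => zpow_ne_zero _ (hx l)
  -- rewrite each factor by the quasiperiodicity law
  have step1 : (∏ a, thetaPoch p (p * q) (∏ l, x l ^ m a l) (m a i) ^ ε a)
      = ∏ a, ((-(∏ l, x l ^ m a l)) ^ (-(m a i * (m a i - 1) / 2))
          * q ^ (-(m a i * (m a i - 1) * (2 * m a i - 1) / 6))
          * p ^ (-(m a i * (m a i - 1) * (m a i - 2) / 6))
          * thetaPoch p q (∏ l, x l ^ m a l) (m a i)) ^ ε a :=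
    Finset.prod_congr rfl fun a _ => by
      rw [main_L hp hp0 hq0 (hxa a) (fun k s => hreg a k s) (m a i)]
  rw [step1]
  simp only [mul_zpow]
  rw [Finset.prod_mul_distrib, Finset.prod_mul_distrib, Finset.prod_mul_distrib]
  -- the three scalar products are 1
  have hsum2 : ∑ a, (-(m a i * (m a i - 1) * (2 * m a i - 1) / 6)) * ε a = 0 := by
    have key : (6:ℤ) * ∑ a, (-(m a i * (m a i - 1) * (2 * m a i - 1) / 6)) * ε a = 0 := by
      rw [Finset.mul_sum]
      rw [Finset.sum_congr rfl (fun a (_ : a ∈ Finset.univ) =>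
        show 6 * ((-(m a i * (m a i - 1) * (2 * m a i - 1) / 6)) * ε a)
          = (-2) * (ε a * m a i * m a i * m a i) + 3 * (ε a * m a i * m a i)
            + (-1) * (ε a * m a i) by linear_combination (-(ε a)) * mulB (m a i))]
      rw [Finset.sum_add_distrib, Finset.sum_add_distrib, ← Finset.mul_sum, ← Finset.mul_sum,
        ← Finset.mul_sum, h3 i i i, h2 i i, h1 i]
      ring
    omega
  have hsum3 : ∑ a, (-(m a i * (m a i - 1) * (m a i - 2) / 6)) * ε a = 0 := by
    have key : (6:ℤ) * ∑ a, (-(m a i * (m a i - 1) * (m a i - 2) / 6)) * ε a = 0 := by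
      rw [Finset.mul_sum]
      rw [Finset.sum_congr rfl (fun a (_ : a ∈ Finset.univ) =>
        show 6 * ((-(m a i * (m a i - 1) * (m a i - 2) / 6)) * ε a)
          = (-1) * (ε a * m a i * m a i * m a i) + 3 * (ε a * m a i * m a i)
            + (-2) * (ε a * m a i) by linear_combination (-(ε a)) * mulC (m a i))]
      rw [Finset.sum_add_distrib, Finset.sum_add_distrib, ← Finset.mul_sum, ← Finset.mul_sum,
        ← Finset.mul_sum, h3 i i i, h2 i i, h1 i]
      ring
    omega
  have hP2 : (∏ a, (q ^ (-(m a i * (m a i - 1) * (2 * m a i - 1) / 6))) ^ ε a) = 1 := by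
    rw [Finset.prod_congr rfl (fun a (_ : a ∈ Finset.univ) =>
      (zpow_mul q (-(m a i * (m a i - 1) * (2 * m a i - 1) / 6)) (ε a)).symm)]
    rw [zpow_sum₀ hq0, hsum2, zpow_zero]
  have hP3 : (∏ a, (p ^ (-(m a i * (m a i - 1) * (m a i - 2) / 6))) ^ ε a) = 1 := by
    rw [Finset.prod_congr rfl (fun a (_ : a ∈ Finset.univ) =>
      (zpow_mul p (-(m a i * (m a i - 1) * (m a i - 2) / 6)) (ε a)).symm)]
    rw [zpow_sum₀ hp0, hsum3, zpow_zero]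
  -- the x-product
  have hsum1 : ∑ a, (-(m a i * (m a i - 1) / 2)) * ε a = 0 := by
    have key : (2:ℤ) * ∑ a, (-(m a i * (m a i - 1) / 2)) * ε a = 0 := by
      rw [Finset.mul_sum]
      rw [Finset.sum_congr rfl (fun a (_ : a ∈ Finset.univ) =>
        show 2 * ((-(m a i * (m a i - 1) / 2)) * ε a)
          = (-1) * (ε a * m a i * m a i) + (ε a * m a i)
          by linear_combination (-(ε a)) * mulA (m a i))]
      rw [Finset.sum_add_distrib, ← Finset.mul_sum, h2 i i, h1 i]
      ring
    omega
  have hsuml : ∀ l : Fin n, ∑ a, m a l * ((-(m a i * (m a i - 1) / 2)) * ε a) = 0 := by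
    intro l
    have key : (2:ℤ) * ∑ a, m a l * ((-(m a i * (m a i - 1) / 2)) * ε a) = 0 := by
      rw [Finset.mul_sum]
      rw [Finset.sum_congr rfl (fun a (_ : a ∈ Finset.univ) =>
        show 2 * (m a l * ((-(m a i * (m a i - 1) / 2)) * ε a))
          = (-1) * (ε a * m a i * m a i * m a l) + (ε a * m a i * m a l)
          by linear_combination (-(m a l * ε a)) * mulA (m a i))]
      rw [Finset.sum_add_distrib, ← Finset.mul_sum, h3 i i l, h2 i l]
      ring
    omega
  have hP1 : (∏ a, ((-(∏ l, x l ^ m a l)) ^ (-(m a i * (m a i - 1) / 2))) ^ ε a) = 1 := by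
    have e1 : ∀ a : Fin K, ((-(∏ l, x l ^ m a l)) ^ (-(m a i * (m a i - 1) / 2))) ^ ε a
        = (-1 : ℂ) ^ ((-(m a i * (m a i - 1) / 2)) * ε a)
          * ∏ l, x l ^ (m a l * ((-(m a i * (m a i - 1) / 2)) * ε a)) := by
      intro a
      rw [← zpow_mul, show -(∏ l, x l ^ m a l) = (-1 : ℂ) * ∏ l, x l ^ m a l by ring,
        mul_zpow, prod_zpow']
      congr 1
      refine Finset.prod_congr rfl fun l _ => ?_
      rw [← zpow_mul]
    rw [Finset.prod_congr rfl (fun a (_ : a ∈ Finset.univ) => e1 a), Finset.prod_mul_distrib]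
    rw [zpow_sum₀ (by norm_num : (-1:ℂ) ≠ 0), hsum1, zpow_zero, one_mul]
    rw [Finset.prod_comm]
    rw [Finset.prod_congr rfl (fun l (_ : l ∈ Finset.univ) => zpow_sum₀ (hx l) Finset.univ _)]
    rw [Finset.prod_congr rfl (fun l (_ : l ∈ Finset.univ) => by rw [hsuml l, zpow_zero])]
    exact Finset.prod_const_one
  rw [hP1, hP2, hP3, one_mul, one_mul, one_mul]
end
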